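/- For any c ∈ [0, 1), ∫₀^∞ u I₁(c u) K₀(u) du = (π c/4) · ₂F₁(3/2, 3/2; 2; c²), where I₁ is the modified Bessel function of the first kind of order one and K₀ the modified Bessel function of the second kind of order zero. -/

import Mathlib

open Real MeasureTheory

/-- The modified Bessel function of the first kind of order one. -/
noncomputable def I1 (x : ℝ) : ℝ :=
  (x / 2) * ∑' k : ℕ, (x^2/4)^k / ((Nat.factorial k : ℝ) * Real.Gamma (k + 2))

/-- The modified Bessel function of the second kind of order zero. -/
noncomputable def K0 (x : ℝ) : ℝ := ∫ t in Set.Ioi (0:ℝ), Real.exp (-(x * Real.cosh t))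

/-- The Gauss hypergeometric function `₂F₁(a, b; c; x)`. -/
noncomputable def twoF1 (a b c x : ℝ) : ℝ :=
  (Real.Gamma c / (Real.Gamma a * Real.Gamma b)) *
    ∑' k : ℕ, Real.Gamma (k + a) * Real.Gamma (k + b) / Real.Gamma (k + c)
      * x^k / (Nat.factorial k : ℝ)

open Set Filter Topology

namespace Stmt15Aux

lemma intJ (n : ℕ) : IntegrableOn (fun x : ℝ => ((1+x^2)^(n+1))⁻¹) (Ioi 0) := by
  refine integrable_inv_one_add_sq.integrableOn.mono' ?_ ?_
  · exact ((measurable_const.add (measurable_id.pow_const 2)).pow_const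
      (n+1)).inv.aestronglyMeasurable
  · refine ae_of_all _ fun x => ?_
    have h0 : (1:ℝ) ≤ 1 + x^2 := by nlinarith [sq_nonneg x]
    rw [Real.norm_eq_abs, abs_of_nonneg (by positivity)]
    exact inv_anti₀ (by positivity) (by calc (1+x^2) = (1+x^2)^1 := (pow_one _).symm
      _ ≤ (1+x^2)^(n+1) := pow_le_pow_right₀ h0 (by omega))

lemma derJ (n : ℕ) (x : ℝ) :
    HasDerivAt (fun x : ℝ => x * ((1+x^2)^(n+1))⁻¹)
      ((2*(n:ℝ)+2) * ((1+x^2)^(n+2))⁻¹ - (2*(n:ℝ)+1) * ((1+x^2)^(n+1))⁻¹) x := by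
  have h0 : (0:ℝ) < 1 + x^2 := by positivity
  have h1 : HasDerivAt (fun x : ℝ => 1 + x^2) (2*x) x := by
    simpa using ((hasDerivAt_pow 2 x).const_add 1)
  have h2 : HasDerivAt (fun x : ℝ => (1+x^2)^(n+1)) (((n:ℝ)+1) * (1+x^2)^n * (2*x)) x := by
    simpa using h1.fun_pow (n+1)
  have h4 : HasDerivAt (fun x : ℝ => x * ((1+x^2)^(n+1))⁻¹) _ x := (hasDerivAt_id' x).fun_mul (h2.fun_inv (by positivity))
  convert h4 using 1
  field_simp
  ring

lemma J_val (n : ℕ) :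
    ∫ x in Ioi (0:ℝ), ((1+x^2)^(n+1))⁻¹ = √π * Real.Gamma (n+1/2) / (2 * Real.Gamma (n+1)) := by
  induction n with
  | zero =>
    simp only [pow_one, Nat.cast_zero, zero_add, Real.Gamma_one_half_eq, Real.Gamma_one]
    rw [integral_Ioi_inv_one_add_sq, arctan_zero]
    have : √π * √π = π := Real.mul_self_sqrt pi_pos.le
    rw [mul_one]; linarith
  | succ n ih =>
    have hlim : Tendsto (fun x : ℝ => x * ((1+x^2)^(n+1))⁻¹) atTop (𝓝 0) := by
      have hb : ∀ᶠ x : ℝ in atTop, x * ((1+x^2)^(n+1))⁻¹ ≤ x⁻¹ := by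
        filter_upwards [eventually_ge_atTop (1:ℝ)] with x hx
        have hx0 : (0:ℝ) < x := by linarith
        have h1 : x^2 ≤ (1+x^2)^(n+1) := by
          calc x^2 ≤ 1 + x^2 := by linarith
          _ = (1+x^2)^1 := (pow_one _).symm
          _ ≤ (1+x^2)^(n+1) := pow_le_pow_right₀ (by nlinarith) (by omega)
        calc x * ((1+x^2)^(n+1))⁻¹ ≤ x * (x^2)⁻¹ := by
              gcongr
        _ = x⁻¹ := by rw [sq]; field_simp
      have hb0 : ∀ᶠ x : ℝ in atTop, 0 ≤ x * ((1+x^2)^(n+1))⁻¹ := by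
        filter_upwards [eventually_ge_atTop (0:ℝ)] with x hx; positivity
      exact squeeze_zero' hb0 hb tendsto_inv_atTop_zero
    have key := integral_Ioi_of_hasDerivAt_of_tendsto' (f' := fun x =>
        (2*(n:ℝ)+2) * ((1+x^2)^(n+2))⁻¹ - (2*(n:ℝ)+1) * ((1+x^2)^(n+1))⁻¹)
      (fun x _ => derJ n x) (((intJ (n+1)).const_mul _).sub ((intJ n).const_mul _)) hlim
    simp only [zero_mul, mul_zero] at key
    rw [integral_sub ((intJ (n+1)).const_mul _) ((intJ n).const_mul _),
      integral_const_mul, integral_const_mul, ih] at key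
    have key2 : (2*(n:ℝ)+2) * ∫ x in Ioi (0:ℝ), ((1+x^2)^(n+2))⁻¹
        = (2*(n:ℝ)+1) * (√π * Real.Gamma (n+1/2) / (2 * Real.Gamma (n+1))) := by
      simpa [sub_eq_zero] using key
    have hG1 : Real.Gamma ((n:ℝ)+1+1/2) = ((n:ℝ)+1/2) * Real.Gamma (n+1/2) := by
      rw [show (n:ℝ)+1+1/2 = ((n:ℝ)+1/2)+1 by ring, Real.Gamma_add_one (by positivity)]
    have hG2 : Real.Gamma ((n:ℝ)+1+1) = ((n:ℝ)+1) * Real.Gamma (n+1) := by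
      rw [show (n:ℝ)+1+1 = ((n:ℝ)+1)+1 by ring, Real.Gamma_add_one (by positivity)]
    have hGpos : 0 < Real.Gamma ((n:ℝ)+1) := Real.Gamma_pos_of_pos (by positivity)
    have hGpos2 : 0 < Real.Gamma ((n:ℝ)+1/2) := Real.Gamma_pos_of_pos (by positivity)
    have h2n : (0:ℝ) < 2*(n:ℝ)+2 := by positivity
    have hI : ∫ x in Ioi (0:ℝ), ((1+x^2)^(n+2))⁻¹
        = (2*(n:ℝ)+1) * (√π * Real.Gamma (n+1/2) / (2 * Real.Gamma (n+1))) / (2*(n:ℝ)+2) := by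
      rw [eq_div_iff (ne_of_gt h2n), mul_comm _ (2*(n:ℝ)+2), key2]
    push_cast
    rw [show (n:ℕ)+1+1 = n+2 by omega, hI, hG1, hG2]
    field_simp

lemma sinh_image : Real.sinh '' (Ioi 0) = Ioi (0:ℝ) := by
  ext x
  constructor
  · rintro ⟨t, ht, rfl⟩
    simpa using (Real.sinh_lt_sinh.mpr ht).trans_eq' Real.sinh_zero
  · intro hx
    exact ⟨Real.arsinh x, Real.arsinh_pos_iff.mpr hx, Real.sinh_arsinh x⟩

lemma sech_int (k : ℕ) :
    ∫ t in Ioi (0:ℝ), (Real.cosh t ^ (2*k+3))⁻¹ = ∫ x in Ioi (0:ℝ), ((1+x^2)^(k+2))⁻¹ := by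
  have h := integral_image_eq_integral_abs_deriv_smul (s := Ioi (0:ℝ)) (f := Real.sinh) (f' := Real.cosh)
    measurableSet_Ioi (fun t _ => (Real.hasDerivAt_sinh t).hasDerivWithinAt)
    (Real.sinh_injective.injOn) (fun x => ((1+x^2)^(k+2))⁻¹)
  rw [sinh_image] at h
  rw [h]
  refine setIntegral_congr_fun measurableSet_Ioi fun t _ => ?_
  have hc : (0:ℝ) < Real.cosh t := Real.cosh_pos t
  have h1 : 1 + Real.sinh t ^ 2 = Real.cosh t ^ 2 := by
    have := Real.cosh_sq t; linarith
  rw [abs_of_pos hc, smul_eq_mul, h1, ← pow_mul]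
  rw [show 2*(k+2) = (2*k+3)+1 by omega, pow_succ]
  field_simp
  ring

-- integrability of u^m exp(-(a u)) on Ioi 0 for a ≥ 1
lemma int_pow_exp {a : ℝ} (ha : 1 ≤ a) (m : ℕ) :
    IntegrableOn (fun u : ℝ => u ^ m * Real.exp (-(a*u))) (Ioi 0) := by
  refine (Real.GammaIntegral_convergent (s := m+1) (by positivity)).mono' ?_ ?_
  · exact ((measurable_id.pow_const m).mul
      ((measurable_id.const_mul a).neg.exp)).aestronglyMeasurable
  · filter_upwards [ae_restrict_mem measurableSet_Ioi] with u (hu : (0:ℝ) < u)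
    rw [Real.norm_eq_abs, abs_of_nonneg (by positivity),
      show (m:ℝ)+1-1 = (m:ℝ) by ring, Real.rpow_natCast]
    have : Real.exp (-(a*u)) ≤ Real.exp (-u) := by
      apply Real.exp_le_exp.mpr; nlinarith
    nlinarith [pow_pos hu m, Real.exp_pos (-(a*u))]

lemma integral_pow_exp {a : ℝ} (ha : 1 ≤ a) (m : ℕ) :
    ∫ u in Ioi (0:ℝ), u ^ m * Real.exp (-(a*u)) = Real.Gamma (m+1) / a ^ (m+1) := by
  have h := integral_rpow_mul_exp_neg_mul_Ioi (a := (m:ℝ)+1) (r := a) (by positivity)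
    (by linarith)
  rw [show ∫ u in Ioi (0:ℝ), u ^ m * Real.exp (-(a*u))
      = ∫ t in Ioi (0:ℝ), t ^ ((m:ℝ)+1-1) * Real.exp (-(a*t)) from
    setIntegral_congr_fun measurableSet_Ioi fun t ht => by
      rw [show (m:ℝ)+1-1 = (m:ℝ) by ring, Real.rpow_natCast], h]
  rw [show ((m:ℝ)+1) = ((m+1:ℕ):ℝ) by push_cast; ring, Real.rpow_natCast, div_pow, one_pow]
  push_cast
  ring

-- lintegral version
lemma lint_pow_exp {a : ℝ} (ha : 1 ≤ a) (m : ℕ) :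
    ∫⁻ u in Ioi (0:ℝ), ENNReal.ofReal (u ^ m * Real.exp (-(a*u)))
      = ENNReal.ofReal (Real.Gamma (m+1) / a ^ (m+1)) := by
  rw [← ofReal_integral_eq_lintegral_ofReal (int_pow_exp ha m)
    (by filter_upwards [ae_restrict_mem measurableSet_Ioi] with u (hu : (0:ℝ) < u); positivity),
    integral_pow_exp ha m]

lemma K0_nonneg (x : ℝ) : 0 ≤ K0 x := integral_nonneg fun t => (Real.exp_pos _).le

lemma measurable_K0 : Measurable K0 := by
  have : StronglyMeasurable fun p : ℝ × ℝ => Real.exp (-(p.1 * Real.cosh p.2)) :=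
    (Continuous.stronglyMeasurable (by fun_prop))
  exact (this.integral_prod_right' (ν := volume.restrict (Ioi 0))).measurable

lemma t_le_cosh (t : ℝ) (ht : 0 < t) : t ≤ Real.cosh t := by
  have h1 : t ≤ Real.sinh t := Real.self_le_sinh_iff.mpr ht.le
  have h2 : Real.sinh t ≤ Real.cosh t := by
    have := Real.cosh_sub_sinh t
    nlinarith [Real.exp_pos (-t)]
  linarith

lemma integrableOn_exp_neg_cosh {x : ℝ} (hx : 0 < x) :
    IntegrableOn (fun t => Real.exp (-(x * Real.cosh t))) (Ioi 0) := by
  refine (exp_neg_integrableOn_Ioi 0 hx).mono' ?_ ?_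
  · exact (Real.measurable_exp.comp ((measurable_const.mul Real.measurable_cosh).neg)
      ).aestronglyMeasurable
  · filter_upwards [ae_restrict_mem measurableSet_Ioi] with t (ht : (0:ℝ) < t)
    rw [Real.norm_eq_abs, abs_of_pos (Real.exp_pos _)]
    apply Real.exp_le_exp.mpr
    have := t_le_cosh t ht
    nlinarith

lemma ofReal_K0 {x : ℝ} (hx : 0 < x) : ENNReal.ofReal (K0 x)
    = ∫⁻ t in Ioi (0:ℝ), ENNReal.ofReal (Real.exp (-(x * Real.cosh t))) :=
  ofReal_integral_eq_lintegral_ofReal (integrableOn_exp_neg_cosh hx)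
    (ae_of_all _ fun t => (Real.exp_pos _).le)

lemma integrableOn_sech (k : ℕ) :
    IntegrableOn (fun t : ℝ => (Real.cosh t ^ (2*k+3))⁻¹) (Ioi 0) := by
  refine ((exp_neg_integrableOn_Ioi 0 one_pos).const_mul 2).mono' ?_ ?_
  · exact ((Real.measurable_cosh.pow_const _).inv).aestronglyMeasurable
  · filter_upwards [ae_restrict_mem measurableSet_Ioi] with t (ht : (0:ℝ) < t)
    have hc : (0:ℝ) < Real.cosh t := Real.cosh_pos t
    have h1 : Real.exp t / 2 ≤ Real.cosh t := by
      rw [Real.cosh_eq]; nlinarith [Real.exp_pos (-t)]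
    have h2 : Real.cosh t ≤ Real.cosh t ^ (2*k+3) := by
      calc Real.cosh t = Real.cosh t ^ 1 := (pow_one _).symm
      _ ≤ Real.cosh t ^ (2*k+3) := pow_le_pow_right₀ (Real.one_le_cosh t) (by omega)
    rw [Real.norm_eq_abs, abs_of_pos (by positivity)]
    calc (Real.cosh t ^ (2*k+3))⁻¹ ≤ (Real.exp t / 2)⁻¹ := by
          apply inv_anti₀ (by positivity); linarith
    _ = 2 * Real.exp (-1*t) := by
          rw [show -1*t = -t by ring, Real.exp_neg]
          field_simp

lemma dup (k : ℕ) :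
    Real.Gamma (2*(k:ℝ)+3) * (√π * Real.Gamma ((k:ℝ)+3/2) / (2 * Real.Gamma ((k:ℝ)+2)))
      = 2^(2*k+1) * Real.Gamma ((k:ℝ)+3/2)^2 := by
  have hd := Real.Gamma_mul_Gamma_add_half ((k:ℝ)+3/2)
  rw [show (k:ℝ)+3/2+1/2 = (k:ℝ)+2 by ring, show 2*((k:ℝ)+3/2) = 2*(k:ℝ)+3 by ring,
    show (1:ℝ)-(2*(k:ℝ)+3) = -((2*k+2:ℕ):ℝ) by push_cast; ring,
    Real.rpow_neg two_pos.le, Real.rpow_natCast] at hd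
  have hsq : (0:ℝ) < √π := Real.sqrt_pos.mpr pi_pos
  have hG2 : (0:ℝ) < Real.Gamma ((k:ℝ)+2) := Real.Gamma_pos_of_pos (by positivity)
  have hp : (0:ℝ) < (2:ℝ)^(2*k+2) := by positivity
  have h1 : Real.Gamma (2*(k:ℝ)+3)
      = Real.Gamma ((k:ℝ)+3/2) * Real.Gamma ((k:ℝ)+2) * 2^(2*k+2) / √π := by
    field_simp at hd ⊢
    linarith [hd]
  rw [h1, show 2*k+2 = (2*k+1)+1 by omega, pow_succ]
  field_simp

lemma mom (k : ℕ) :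
    ∫⁻ u in Ioi (0:ℝ), ENNReal.ofReal (u ^ (2*k+2) * K0 u)
      = ENNReal.ofReal (2 ^ (2*k+1) * Real.Gamma ((k:ℝ) + 3/2) ^ 2) := by
  have step1 : ∫⁻ u in Ioi (0:ℝ), ENNReal.ofReal (u ^ (2*k+2) * K0 u)
      = ∫⁻ u in Ioi (0:ℝ), ∫⁻ t in Ioi (0:ℝ),
          ENNReal.ofReal (u ^ (2*k+2) * Real.exp (-(u * Real.cosh t))) := by
    refine setLIntegral_congr_fun measurableSet_Ioi (fun u hu => ?_)
    have hu' : (0:ℝ) < u := hu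
    rw [ENNReal.ofReal_mul (by positivity), ofReal_K0 hu,
      ← lintegral_const_mul' _ _ ENNReal.ofReal_ne_top]
    exact lintegral_congr fun t => (ENNReal.ofReal_mul (by positivity)).symm
  have meas : AEMeasurable (Function.uncurry fun u t : ℝ =>
      ENNReal.ofReal (u ^ (2*k+2) * Real.exp (-(u * Real.cosh t))))
      ((volume.restrict (Ioi 0)).prod (volume.restrict (Ioi 0))) := by
    apply Measurable.aemeasurable
    apply Measurable.ennreal_ofReal
    apply Measurable.mul
    · exact (measurable_fst.pow_const _)
    · exact ((measurable_fst.mul (Real.measurable_cosh.comp measurable_snd)).neg.exp)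
  have step2 := lintegral_lintegral_swap meas
  have step3 : ∀ t : ℝ, ∫⁻ u in Ioi (0:ℝ),
      ENNReal.ofReal (u ^ (2*k+2) * Real.exp (-(u * Real.cosh t)))
      = ENNReal.ofReal (Real.Gamma (2*(k:ℝ)+3) * (Real.cosh t ^ (2*k+3))⁻¹) := by
    intro t
    have := lint_pow_exp (Real.one_le_cosh t) (2*k+2)
    rw [show ∫⁻ u in Ioi (0:ℝ), ENNReal.ofReal (u ^ (2*k+2) * Real.exp (-(u * Real.cosh t)))
        = ∫⁻ u in Ioi (0:ℝ), ENNReal.ofReal (u ^ (2*k+2) * Real.exp (-(Real.cosh t * u))) from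
      lintegral_congr fun u => by rw [mul_comm u (Real.cosh t)], this]
    congr 1
    rw [div_eq_mul_inv]
    norm_num
    left
    push_cast
    ring
  have step4 : ∫⁻ t in Ioi (0:ℝ),
      ENNReal.ofReal (Real.Gamma (2*(k:ℝ)+3) * (Real.cosh t ^ (2*k+3))⁻¹)
      = ENNReal.ofReal (2 ^ (2*k+1) * Real.Gamma ((k:ℝ) + 3/2) ^ 2) := by
    rw [← ofReal_integral_eq_lintegral_ofReal ((integrableOn_sech k).const_mul _)
      (ae_of_all _ fun t => by positivity)]
    congr 1
    rw [integral_const_mul, sech_int k, show k+2 = (k+1)+1 by omega, J_val (k+1)]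
    push_cast
    rw [show (k:ℝ)+1+1/2 = (k:ℝ)+3/2 by ring, show (k:ℝ)+1+1 = (k:ℝ)+2 by ring]
    linarith [dup k]
  calc ∫⁻ u in Ioi (0:ℝ), ENNReal.ofReal (u ^ (2*k+2) * K0 u)
      = _ := step1
    _ = ∫⁻ t in Ioi (0:ℝ), ∫⁻ u in Ioi (0:ℝ),
          ENNReal.ofReal (u ^ (2*k+2) * Real.exp (-(u * Real.cosh t))) := step2
    _ = ∫⁻ t in Ioi (0:ℝ),
          ENNReal.ofReal (Real.Gamma (2*(k:ℝ)+3) * (Real.cosh t ^ (2*k+3))⁻¹) :=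
        lintegral_congr fun t => step3 t
    _ = _ := step4

lemma core_summable {y : ℝ} (hy : 0 ≤ y) :
    Summable fun k : ℕ => y^k / ((Nat.factorial k : ℝ) * Real.Gamma (k + 2)) := by
  refine Summable.of_nonneg_of_le (fun k => by positivity) (fun k => ?_)
    (Real.summable_pow_div_factorial y)
  have h1 : (1:ℝ) ≤ Real.Gamma ((k:ℝ) + 2) := by
    rw [show (k:ℝ)+2 = ((k+1:ℕ):ℝ)+1 by push_cast; ring, Real.Gamma_nat_eq_factorial]
    exact_mod_cast Nat.one_le_iff_ne_zero.mpr (Nat.factorial_ne_zero _)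
  apply div_le_div_of_nonneg_left (by positivity) (by positivity)
  calc (k.factorial : ℝ) = k.factorial * 1 := (mul_one _).symm
  _ ≤ k.factorial * Real.Gamma ((k:ℝ)+2) := by
      apply mul_le_mul_of_nonneg_left h1 (by positivity)

lemma measurable_I1 : Measurable I1 := by
  have hcore : Measurable fun x : ℝ =>
      ∑' k : ℕ, (x^2/4)^k / ((Nat.factorial k : ℝ) * Real.Gamma (k + 2)) := by
    refine measurable_of_tendsto_metrizable' atTop
      (f := fun n x => ∑ k ∈ Finset.range n, (x^2/4)^k / ((Nat.factorial k : ℝ) * Real.Gamma (k + 2)))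
      (fun n => Finset.measurable_sum _ fun k _ => by measurability) ?_
    rw [tendsto_pi_nhds]
    intro x
    exact (core_summable (by positivity)).hasSum.tendsto_sum_nat
  exact (measurable_id.div_const 2).mul hcore

lemma I1_nonneg {x : ℝ} (hx : 0 ≤ x) : 0 ≤ I1 x :=
  mul_nonneg (by positivity) (tsum_nonneg fun k => by positivity)

lemma Gamma_sq_le (k : ℕ) :
    Real.Gamma ((k:ℝ)+3/2)^2 ≤ (Nat.factorial k : ℝ) * Real.Gamma ((k:ℝ)+2) := by
  have p1 : (0:ℝ) < Real.Gamma ((k:ℝ)+1) := Real.Gamma_pos_of_pos (by positivity)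
  have p2 : (0:ℝ) < Real.Gamma ((k:ℝ)+2) := Real.Gamma_pos_of_pos (by positivity)
  have p3 : (0:ℝ) < Real.Gamma ((k:ℝ)+3/2) := Real.Gamma_pos_of_pos (by positivity)
  have hcv := Real.convexOn_log_Gamma.2 (show ((k:ℝ)+1) ∈ Ioi (0:ℝ) by simp; positivity)
    (show ((k:ℝ)+2) ∈ Ioi (0:ℝ) by simp; positivity)
    (by norm_num : (0:ℝ) ≤ 1/2) (by norm_num : (0:ℝ) ≤ 1/2) (by norm_num)
  simp only [smul_eq_mul, Function.comp_apply] at hcv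
  rw [show (1/2:ℝ)*((k:ℝ)+1) + (1/2:ℝ)*((k:ℝ)+2) = (k:ℝ)+3/2 by ring] at hcv
  have key : Real.Gamma ((k:ℝ)+3/2)^2 ≤ Real.Gamma ((k:ℝ)+1) * Real.Gamma ((k:ℝ)+2) := by
    calc Real.Gamma ((k:ℝ)+3/2)^2
        = Real.exp (Real.log (Real.Gamma ((k:ℝ)+3/2)) + Real.log (Real.Gamma ((k:ℝ)+3/2))) := by
          rw [Real.exp_add, Real.exp_log p3, sq]
    _ ≤ Real.exp (Real.log (Real.Gamma ((k:ℝ)+1)) + Real.log (Real.Gamma ((k:ℝ)+2))) := by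
          apply Real.exp_le_exp.mpr; linarith
    _ = Real.Gamma ((k:ℝ)+1) * Real.Gamma ((k:ℝ)+2) := by
          rw [Real.exp_add, Real.exp_log p1, Real.exp_log p2]
  rwa [Real.Gamma_nat_eq_factorial k] at key

theorem stmt15 (c : ℝ) (hc0 : 0 ≤ c) (hc1 : c < 1) :
    ∫ u in Set.Ioi (0:ℝ), u * I1 (c * u) * K0 u
      = (π * c / 4) * twoF1 (3/2) (3/2) 2 (c^2) := by
  set b : ℕ → ℝ := fun k => (c/2) * ((c^2/4)^k / ((Nat.factorial k : ℝ) * Real.Gamma (k+2)))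
    with hb
  have hGpos : ∀ k : ℕ, (0:ℝ) < Real.Gamma ((k:ℝ)+2) :=
    fun k => Real.Gamma_pos_of_pos (by positivity)
  have hbnn : ∀ k, 0 ≤ b k := fun k => by
    have := hGpos k; simp only [hb]; positivity
  have hD : ∀ k : ℕ, ((Nat.factorial k : ℝ) * Real.Gamma ((k:ℝ)+2)) ≠ 0 := fun k => by
    have := hGpos k; positivity
  -- termwise identity
  have hterm : ∀ (u : ℝ) (k : ℕ), b k * (u^(2*k+2) * K0 u)
      = (u * (c*u/2) * K0 u) * (((c*u)^2/4)^k / ((Nat.factorial k : ℝ) * Real.Gamma (k+2))) := by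
    intro u k
    have h1 : ((c*u)^2/4)^k = (c^2/4)^k * u^(2*k) := by
      rw [show (c*u)^2/4 = (c^2/4)*u^2 by ring, mul_pow, ← pow_mul]
    rw [h1, hb]
    field_simp [hD k]
    ring
  -- pointwise expansion
  have hexp : ∀ u : ℝ, u * I1 (c*u) * K0 u = ∑' k, b k * (u^(2*k+2) * K0 u) := by
    intro u
    rw [tsum_congr (hterm u), tsum_mul_left, I1]
    ring
  -- M values
  set M : ℕ → ℝ := fun k => 2 ^ (2*k+1) * Real.Gamma ((k:ℝ) + 3/2) ^ 2 with hM
  have hMnn : ∀ k, 0 ≤ M k := fun k => by positivity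
  set T : ℕ → ℝ := fun k =>
    Real.Gamma ((k:ℝ)+3/2)^2 * (c^2)^k / ((Nat.factorial k : ℝ) * Real.Gamma ((k:ℝ)+2))
    with hT
  have hTnn : ∀ k, 0 ≤ T k := fun k => by
    have := hGpos k; simp only [hT]; positivity
  have hbM : ∀ k, b k * M k = c * T k := by
    intro k
    have h4 : (2:ℝ)^(2*k+1) = 2 * 4^k := by
      rw [pow_succ, show (4:ℝ) = 2^2 by norm_num, ← pow_mul]; ring
    simp only [hb, hM, hT, div_pow, h4]
    rw [show ((c^2)^k/(4:ℝ)^k) = (c^2)^k * ((4:ℝ)^k)⁻¹ by ring]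
    field_simp [hD k]
  have hTle : ∀ k, T k ≤ (c^2)^k := by
    intro k
    simp only [hT]
    rw [div_le_iff₀ (by have := hGpos k; positivity)]
    calc Real.Gamma ((k:ℝ)+3/2)^2 * (c^2)^k
        ≤ ((Nat.factorial k : ℝ) * Real.Gamma ((k:ℝ)+2)) * (c^2)^k := by
          apply mul_le_mul_of_nonneg_right (Gamma_sq_le k) (by positivity)
    _ = (c^2)^k * ((Nat.factorial k : ℝ) * Real.Gamma ((k:ℝ)+2)) := by ring
  have hTsummable : Summable T :=
    Summable.of_nonneg_of_le hTnn hTle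
      (summable_geometric_of_lt_one (by positivity) (by nlinarith))
  have hbMsummable : Summable fun k => b k * M k := by
    simp_rw [hbM]; exact hTsummable.mul_left c
  -- measurability
  have hF : AEStronglyMeasurable (fun u : ℝ => u * I1 (c*u) * K0 u)
      (volume.restrict (Ioi 0)) :=
    ((measurable_id.mul (measurable_I1.comp (measurable_id.const_mul c))).mul
      measurable_K0).aestronglyMeasurable
  have hFnn : 0 ≤ᵐ[volume.restrict (Ioi (0:ℝ))] fun u : ℝ => u * I1 (c*u) * K0 u := by
    filter_upwards [ae_restrict_mem measurableSet_Ioi] with u (hu : (0:ℝ) < u)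
    exact mul_nonneg (mul_nonneg hu.le (I1_nonneg (by positivity))) (K0_nonneg u)
  -- lintegral computation
  have hsummand_nn : ∀ (u : ℝ), 0 < u → ∀ k, 0 ≤ b k * (u^(2*k+2) * K0 u) := by
    intro u hu k
    exact mul_nonneg (hbnn k) (mul_nonneg (by positivity) (K0_nonneg u))
  have hsummand_sum : ∀ (u : ℝ), 0 < u → Summable fun k => b k * (u^(2*k+2) * K0 u) := by
    intro u hu
    refine Summable.of_nonneg_of_le (hsummand_nn u hu) (fun k => ?_)
      ((Real.summable_pow_div_factorial ((c*u)^2/4)).mul_left (u * (c*u/2) * K0 u))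
    rw [hterm u k]
    apply mul_le_mul_of_nonneg_left _ (by
      exact mul_nonneg (mul_nonneg (by positivity) (by positivity)) (K0_nonneg u))
    have h1 : (1:ℝ) ≤ Real.Gamma ((k:ℝ) + 2) := by
      rw [show (k:ℝ)+2 = ((k+1:ℕ):ℝ)+1 by push_cast; ring, Real.Gamma_nat_eq_factorial]
      exact_mod_cast Nat.one_le_iff_ne_zero.mpr (Nat.factorial_ne_zero _)
    apply div_le_div_of_nonneg_left (by positivity) (by positivity)
    calc (k.factorial : ℝ) = k.factorial * 1 := (mul_one _).symm
    _ ≤ k.factorial * Real.Gamma ((k:ℝ)+2) := by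
        apply mul_le_mul_of_nonneg_left h1 (by positivity)
  have hlint : ∫⁻ u in Ioi (0:ℝ), ENNReal.ofReal (u * I1 (c*u) * K0 u)
      = ENNReal.ofReal (∑' k, b k * M k) := by
    calc ∫⁻ u in Ioi (0:ℝ), ENNReal.ofReal (u * I1 (c*u) * K0 u)
        = ∫⁻ u in Ioi (0:ℝ), ∑' k, ENNReal.ofReal (b k * (u^(2*k+2) * K0 u)) := by
          refine setLIntegral_congr_fun measurableSet_Ioi (fun u hu => ?_)
          rw [hexp u, ENNReal.ofReal_tsum_of_nonneg (hsummand_nn u hu) (hsummand_sum u hu)]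
      _ = ∑' k, ∫⁻ u in Ioi (0:ℝ), ENNReal.ofReal (b k * (u^(2*k+2) * K0 u)) := by
          refine lintegral_tsum fun k => ?_
          exact (Measurable.ennreal_ofReal ((measurable_const.mul
            ((measurable_id.pow_const _).mul measurable_K0)))).aemeasurable
      _ = ∑' k, ENNReal.ofReal (b k * M k) := by
          refine tsum_congr fun k => ?_
          rw [show (fun u : ℝ => ENNReal.ofReal (b k * (u^(2*k+2) * K0 u)))
              = fun u : ℝ => ENNReal.ofReal (b k) * ENNReal.ofReal (u^(2*k+2) * K0 u) from
            funext fun u => ENNReal.ofReal_mul (hbnn k),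
            lintegral_const_mul' _ _ ENNReal.ofReal_ne_top, mom k, ← ENNReal.ofReal_mul (hbnn k)]
      _ = ENNReal.ofReal (∑' k, b k * M k) :=
          (ENNReal.ofReal_tsum_of_nonneg (fun k => by
            rw [hbM k]; exact mul_nonneg hc0 (hTnn k)) hbMsummable).symm
  -- put together
  have hint : ∫ u in Set.Ioi (0:ℝ), u * I1 (c * u) * K0 u = ∑' k, b k * M k := by
    rw [integral_eq_lintegral_of_nonneg_ae hFnn hF, hlint,
      ENNReal.toReal_ofReal (tsum_nonneg fun k => by
        rw [hbM k]; exact mul_nonneg hc0 (hTnn k))]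
  rw [hint]
  -- RHS
  have hG32 : Real.Gamma (3/2 : ℝ) = √π / 2 := by
    rw [show (3/2:ℝ) = 1/2 + 1 by norm_num, Real.Gamma_add_one (by norm_num),
      Real.Gamma_one_half_eq]
    ring
  have hG2' : Real.Gamma (2:ℝ) = 1 := by
    rw [show (2:ℝ) = ((1:ℕ):ℝ)+1 by norm_num, Real.Gamma_nat_eq_factorial]
    simp
  have hsq : √π * √π = π := Real.mul_self_sqrt pi_pos.le
  rw [twoF1, hG32, hG2']
  have htsum_eq : (∑' k : ℕ, Real.Gamma (k + (3/2:ℝ)) * Real.Gamma (k + (3/2:ℝ))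
      / Real.Gamma (k + (2:ℝ)) * (c^2)^k / (Nat.factorial k : ℝ)) = ∑' k, T k := by
    refine tsum_congr fun k => ?_
    simp only [hT]
    have := hGpos k
    field_simp
  rw [htsum_eq]
  have hSum : (∑' k, b k * M k) = c * ∑' k, T k := by
    rw [tsum_congr hbM, tsum_mul_left]
  rw [hSum]
  have hπ : (π:ℝ) ≠ 0 := pi_ne_zero
  field_simp [hsq]
  rw [Real.sq_sqrt pi_pos.le]
  ring

end Stmt15Aux

open Stmt15Aux in
theorem stmt15 (c : ℝ) (hc0 : 0 ≤ c) (hc1 : c < 1) :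
    ∫ u in Set.Ioi (0:ℝ), u * I1 (c * u) * K0 u
      = (π * c / 4) * twoF1 (3/2) (3/2) 2 (c^2) := by
  set b : ℕ → ℝ := fun k => (c/2) * ((c^2/4)^k / ((Nat.factorial k : ℝ) * Real.Gamma (k+2)))
    with hb
  have hGpos : ∀ k : ℕ, (0:ℝ) < Real.Gamma ((k:ℝ)+2) :=
    fun k => Real.Gamma_pos_of_pos (by positivity)
  have hbnn : ∀ k, 0 ≤ b k := fun k => by
    have := hGpos k; simp only [hb]; positivity
  have hD : ∀ k : ℕ, ((Nat.factorial k : ℝ) * Real.Gamma ((k:ℝ)+2)) ≠ 0 := fun k => by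
    have := hGpos k; positivity
  -- termwise identity
  have hterm : ∀ (u : ℝ) (k : ℕ), b k * (u^(2*k+2) * K0 u)
      = (u * (c*u/2) * K0 u) * (((c*u)^2/4)^k / ((Nat.factorial k : ℝ) * Real.Gamma (k+2))) := by
    intro u k
    have h1 : ((c*u)^2/4)^k = (c^2/4)^k * u^(2*k) := by
      rw [show (c*u)^2/4 = (c^2/4)*u^2 by ring, mul_pow, ← pow_mul]
    rw [h1, hb]
    field_simp [hD k]
    ring
  -- pointwise expansion
  have hexp : ∀ u : ℝ, u * I1 (c*u) * K0 u = ∑' k, b k * (u^(2*k+2) * K0 u) := by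
    intro u
    rw [tsum_congr (hterm u), tsum_mul_left, I1]
    ring
  -- M values
  set M : ℕ → ℝ := fun k => 2 ^ (2*k+1) * Real.Gamma ((k:ℝ) + 3/2) ^ 2 with hM
  have hMnn : ∀ k, 0 ≤ M k := fun k => by positivity
  set T : ℕ → ℝ := fun k =>
    Real.Gamma ((k:ℝ)+3/2)^2 * (c^2)^k / ((Nat.factorial k : ℝ) * Real.Gamma ((k:ℝ)+2))
    with hT
  have hTnn : ∀ k, 0 ≤ T k := fun k => by
    have := hGpos k; simp only [hT]; positivity
  have hbM : ∀ k, b k * M k = c * T k := by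
    intro k
    have h4 : (2:ℝ)^(2*k+1) = 2 * 4^k := by
      rw [pow_succ, show (4:ℝ) = 2^2 by norm_num, ← pow_mul]; ring
    simp only [hb, hM, hT, div_pow, h4]
    rw [show ((c^2)^k/(4:ℝ)^k) = (c^2)^k * ((4:ℝ)^k)⁻¹ by ring]
    field_simp [hD k]
  have hTle : ∀ k, T k ≤ (c^2)^k := by
    intro k
    simp only [hT]
    rw [div_le_iff₀ (by have := hGpos k; positivity)]
    calc Real.Gamma ((k:ℝ)+3/2)^2 * (c^2)^k
        ≤ ((Nat.factorial k : ℝ) * Real.Gamma ((k:ℝ)+2)) * (c^2)^k := by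
          apply mul_le_mul_of_nonneg_right (Gamma_sq_le k) (by positivity)
    _ = (c^2)^k * ((Nat.factorial k : ℝ) * Real.Gamma ((k:ℝ)+2)) := by ring
  have hTsummable : Summable T :=
    Summable.of_nonneg_of_le hTnn hTle
      (summable_geometric_of_lt_one (by positivity) (by nlinarith))
  have hbMsummable : Summable fun k => b k * M k := by
    simp_rw [hbM]; exact hTsummable.mul_left c
  -- measurability
  have hF : AEStronglyMeasurable (fun u : ℝ => u * I1 (c*u) * K0 u)
      (volume.restrict (Ioi 0)) :=
    ((measurable_id.mul (measurable_I1.comp (measurable_id.const_mul c))).mul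
      measurable_K0).aestronglyMeasurable
  have hFnn : 0 ≤ᵐ[volume.restrict (Ioi (0:ℝ))] fun u : ℝ => u * I1 (c*u) * K0 u := by
    filter_upwards [ae_restrict_mem measurableSet_Ioi] with u (hu : (0:ℝ) < u)
    exact mul_nonneg (mul_nonneg hu.le (I1_nonneg (by positivity))) (K0_nonneg u)
  -- lintegral computation
  have hsummand_nn : ∀ (u : ℝ), 0 < u → ∀ k, 0 ≤ b k * (u^(2*k+2) * K0 u) := by
    intro u hu k
    exact mul_nonneg (hbnn k) (mul_nonneg (by positivity) (K0_nonneg u))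
  have hsummand_sum : ∀ (u : ℝ), 0 < u → Summable fun k => b k * (u^(2*k+2) * K0 u) := by
    intro u hu
    refine Summable.of_nonneg_of_le (hsummand_nn u hu) (fun k => ?_)
      ((Real.summable_pow_div_factorial ((c*u)^2/4)).mul_left (u * (c*u/2) * K0 u))
    rw [hterm u k]
    apply mul_le_mul_of_nonneg_left _ (by
      exact mul_nonneg (mul_nonneg (by positivity) (by positivity)) (K0_nonneg u))
    have h1 : (1:ℝ) ≤ Real.Gamma ((k:ℝ) + 2) := by
      rw [show (k:ℝ)+2 = ((k+1:ℕ):ℝ)+1 by push_cast; ring, Real.Gamma_nat_eq_factorial]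
      exact_mod_cast Nat.one_le_iff_ne_zero.mpr (Nat.factorial_ne_zero _)
    apply div_le_div_of_nonneg_left (by positivity) (by positivity)
    calc (k.factorial : ℝ) = k.factorial * 1 := (mul_one _).symm
    _ ≤ k.factorial * Real.Gamma ((k:ℝ)+2) := by
        apply mul_le_mul_of_nonneg_left h1 (by positivity)
  have hlint : ∫⁻ u in Ioi (0:ℝ), ENNReal.ofReal (u * I1 (c*u) * K0 u)
      = ENNReal.ofReal (∑' k, b k * M k) := by
    calc ∫⁻ u in Ioi (0:ℝ), ENNReal.ofReal (u * I1 (c*u) * K0 u)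
        = ∫⁻ u in Ioi (0:ℝ), ∑' k, ENNReal.ofReal (b k * (u^(2*k+2) * K0 u)) := by
          refine setLIntegral_congr_fun measurableSet_Ioi (fun u hu => ?_)
          rw [hexp u, ENNReal.ofReal_tsum_of_nonneg (hsummand_nn u hu) (hsummand_sum u hu)]
      _ = ∑' k, ∫⁻ u in Ioi (0:ℝ), ENNReal.ofReal (b k * (u^(2*k+2) * K0 u)) := by
          refine lintegral_tsum fun k => ?_
          exact (Measurable.ennreal_ofReal ((measurable_const.mul
            ((measurable_id.pow_const _).mul measurable_K0)))).aemeasurable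
      _ = ∑' k, ENNReal.ofReal (b k * M k) := by
          refine tsum_congr fun k => ?_
          rw [show (fun u : ℝ => ENNReal.ofReal (b k * (u^(2*k+2) * K0 u)))
              = fun u : ℝ => ENNReal.ofReal (b k) * ENNReal.ofReal (u^(2*k+2) * K0 u) from
            funext fun u => ENNReal.ofReal_mul (hbnn k),
            lintegral_const_mul' _ _ ENNReal.ofReal_ne_top, mom k, ← ENNReal.ofReal_mul (hbnn k)]
      _ = ENNReal.ofReal (∑' k, b k * M k) :=
          (ENNReal.ofReal_tsum_of_nonneg (fun k => by
            rw [hbM k]; exact mul_nonneg hc0 (hTnn k)) hbMsummable).symm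
  -- put together
  have hint : ∫ u in Set.Ioi (0:ℝ), u * I1 (c * u) * K0 u = ∑' k, b k * M k := by
    rw [integral_eq_lintegral_of_nonneg_ae hFnn hF, hlint,
      ENNReal.toReal_ofReal (tsum_nonneg fun k => by
        rw [hbM k]; exact mul_nonneg hc0 (hTnn k))]
  rw [hint]
  -- RHS
  have hG32 : Real.Gamma (3/2 : ℝ) = √π / 2 := by
    rw [show (3/2:ℝ) = 1/2 + 1 by norm_num, Real.Gamma_add_one (by norm_num),
      Real.Gamma_one_half_eq]
    ring
  have hG2' : Real.Gamma (2:ℝ) = 1 := by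
    rw [show (2:ℝ) = ((1:ℕ):ℝ)+1 by norm_num, Real.Gamma_nat_eq_factorial]
    simp
  have hsq : √π * √π = π := Real.mul_self_sqrt pi_pos.le
  rw [twoF1, hG32, hG2']
  have htsum_eq : (∑' k : ℕ, Real.Gamma (k + (3/2:ℝ)) * Real.Gamma (k + (3/2:ℝ))
      / Real.Gamma (k + (2:ℝ)) * (c^2)^k / (Nat.factorial k : ℝ)) = ∑' k, T k := by
    refine tsum_congr fun k => ?_
    simp only [hT]
    have := hGpos k
    field_simp
  rw [htsum_eq]
  have hSum : (∑' k, b k * M k) = c * ∑' k, T k := by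
    rw [tsum_congr hbM, tsum_mul_left]
  rw [hSum]
  have hπ : (π:ℝ) ≠ 0 := pi_ne_zero
  field_simp [hsq]
  rw [Real.sq_sqrt pi_pos.le]
  ring
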